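/- Let A be a simplicial abelian group and n ≥ 0. Then the underlying simplicial set of A is an n-hypergroupoid if and only if the normalized Moore complex N(A), with N_m(A) = ⋂_{i=1}^{m} ker(∂_i : A_m → A_{m−1}), vanishes in all degrees m > n. In particular, under the Dold–Kan correspondence, n-hypergroupoids in abelian groups correspond exactly to chain complexes concentrated in degrees [0, n]. -/

import Mathlib

/-!
STATEMENT 8: for a simplicial abelian group `A`, the underlying simplicial set is an
`n`-hypergroupoid iff the normalized Moore complex of `A` vanishes in degrees `> n`
(Dold–Kan: `n`-hypergroupoids in abelian groups = chain complexes in degrees `[0, n]`).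
-/

open CategoryTheory Simplicial SSet

universe u

/-- The partial matching map of a simplicial set `X`: restriction of `m`-simplices
(viewed as maps `Δ[m] ⟶ X`) along the horn inclusion `Λ[m, k] ⊆ Δ[m]`. -/
def partialMatchingMap (X : SSet.{u}) (m : ℕ) (k : Fin (m + 1)) (x : X _⦋m⦌) :
    ((Λ[m, k] : SSet.{u}) ⟶ X) :=
  (Λ[m, k] : (Δ[m] : SSet.{u}).Subcomplex).ι ≫ (SSet.yonedaEquiv (X := X) (n := ⦋m⦌)).symm x

/-- A simplicial set `X` is an `n`-hypergroupoid if all partial matching maps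
`X_m → Hom(Λ[m,k], X)` (for `m ≥ 1`, `0 ≤ k ≤ m`) are surjective, and those with `m > n`
are bijective. -/
def IsHypergroupoid (n : ℕ) (X : SSet.{u}) : Prop :=
  (∀ (m : ℕ) (k : Fin (m + 2)), Function.Surjective (partialMatchingMap X (m + 1) k)) ∧
  (∀ (m : ℕ) (k : Fin (m + 2)), n < m + 1 →
    Function.Bijective (partialMatchingMap X (m + 1) k))

namespace HyperAux

open Opposite CategoryTheory.Limits

variable (A : CategoryTheory.SimplicialObject AddCommGrpCat.{u})

/-! ### Elementwise simplicial identities, in `Fin.mk` form -/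

lemma dσ_self' (n p : ℕ) (hp : p < n + 1) (w : A.obj (op (SimplexCategory.mk n))) :
    A.δ (⟨p, by omega⟩ : Fin (n + 2)) (A.σ (⟨p, hp⟩ : Fin (n + 1)) w) = w := by
  have h := SimplicialObject.δ_comp_σ_self (X := A) (i := (⟨p, hp⟩ : Fin (n + 1)))
  calc A.δ (⟨p, by omega⟩ : Fin (n + 2)) (A.σ (⟨p, hp⟩ : Fin (n + 1)) w)
      = (A.σ (⟨p, hp⟩ : Fin (n + 1)) ≫ A.δ (Fin.castSucc ⟨p, hp⟩)) w := rfl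
    _ = (𝟙 (A.obj (op (SimplexCategory.mk n)))) w := by rw [h]
    _ = w := rfl

lemma dσ_succ' (n q : ℕ) (hq0 : 0 < q) (hq : q < n + 2) (w : A.obj (op (SimplexCategory.mk n))) :
    A.δ (⟨q, by omega⟩ : Fin (n + 2)) (A.σ (⟨q - 1, by omega⟩ : Fin (n + 1)) w) = w := by
  have h := SimplicialObject.δ_comp_σ_succ (X := A) (i := (⟨q - 1, by omega⟩ : Fin (n + 1)))
  have e : (⟨q, by omega⟩ : Fin (n + 2)) = Fin.succ ⟨q - 1, by omega⟩ := by
    apply Fin.ext; simp; omega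
  rw [e]
  calc A.δ (Fin.succ ⟨q - 1, by omega⟩) (A.σ (⟨q - 1, by omega⟩ : Fin (n + 1)) w)
      = (A.σ (⟨q - 1, by omega⟩ : Fin (n + 1)) ≫ A.δ (Fin.succ ⟨q - 1, by omega⟩)) w := rfl
    _ = (𝟙 (A.obj (op (SimplexCategory.mk n)))) w := by rw [h]
    _ = w := rfl

lemma dσ_le' (n q a : ℕ) (hq : q < n + 2) (hqa : a < q)
    (w : A.obj (op (SimplexCategory.mk (n + 1)))) :
    A.δ (⟨a, by omega⟩ : Fin (n + 3)) (A.σ (⟨q, hq⟩ : Fin (n + 2)) w)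
      = A.σ (⟨q - 1, by omega⟩ : Fin (n + 1)) (A.δ (⟨a, by omega⟩ : Fin (n + 2)) w) := by
  have e : (⟨q, hq⟩ : Fin (n + 2)) = Fin.succ ⟨q - 1, by omega⟩ := by
    apply Fin.ext; simp; omega
  rw [e]
  have h := SimplicialObject.δ_comp_σ_of_le (X := A) (i := (⟨a, by omega⟩ : Fin (n + 2)))
    (j := (⟨q - 1, by omega⟩ : Fin (n + 1))) (by simp [Fin.le_def]; omega)
  calc A.δ (⟨a, by omega⟩ : Fin (n + 3)) (A.σ (Fin.succ ⟨q - 1, by omega⟩) w)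
      = (A.σ (Fin.succ ⟨q - 1, by omega⟩) ≫ A.δ (Fin.castSucc ⟨a, by omega⟩)) w := rfl
    _ = (A.δ (⟨a, by omega⟩ : Fin (n + 2)) ≫ A.σ (⟨q - 1, by omega⟩ : Fin (n + 1))) w := by
        rw [h]
    _ = A.σ (⟨q - 1, by omega⟩ : Fin (n + 1)) (A.δ (⟨a, by omega⟩ : Fin (n + 2)) w) := rfl

lemma dσ_gt' (n q b : ℕ) (hq : q < n + 1) (hb : q + 1 < b) (hbn : b < n + 3)
    (w : A.obj (op (SimplexCategory.mk (n + 1)))) :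
    A.δ (⟨b, hbn⟩ : Fin (n + 3)) (A.σ (⟨q, by omega⟩ : Fin (n + 2)) w)
      = A.σ (⟨q, hq⟩ : Fin (n + 1)) (A.δ (⟨b - 1, by omega⟩ : Fin (n + 2)) w) := by
  have e : (⟨b, hbn⟩ : Fin (n + 3)) = Fin.succ ⟨b - 1, by omega⟩ := by
    apply Fin.ext; simp; omega
  rw [e]
  have h := SimplicialObject.δ_comp_σ_of_gt (X := A) (i := (⟨b - 1, by omega⟩ : Fin (n + 2)))
    (j := (⟨q, hq⟩ : Fin (n + 1))) (by simp [Fin.lt_def]; omega)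
  calc A.δ (Fin.succ ⟨b - 1, by omega⟩) (A.σ (⟨q, by omega⟩ : Fin (n + 2)) w)
      = (A.σ (Fin.castSucc ⟨q, hq⟩) ≫ A.δ (Fin.succ ⟨b - 1, by omega⟩)) w := rfl
    _ = (A.δ (⟨b - 1, by omega⟩ : Fin (n + 2)) ≫ A.σ (⟨q, hq⟩ : Fin (n + 1))) w := by rw [h]
    _ = A.σ (⟨q, hq⟩ : Fin (n + 1)) (A.δ (⟨b - 1, by omega⟩ : Fin (n + 2)) w) := rfl

lemma dδδ' (n a b : ℕ) (hab : a < b) (hb : b < n + 3)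
    (u : A.obj (op (SimplexCategory.mk (n + 2)))) :
    A.δ (⟨a, by omega⟩ : Fin (n + 2)) (A.δ (⟨b, hb⟩ : Fin (n + 3)) u)
      = A.δ (⟨b - 1, by omega⟩ : Fin (n + 2)) (A.δ (⟨a, by omega⟩ : Fin (n + 3)) u) := by
  have e : (⟨b, hb⟩ : Fin (n + 3)) = Fin.succ ⟨b - 1, by omega⟩ := by
    apply Fin.ext; simp; omega
  rw [e]
  have h := SimplicialObject.δ_comp_δ (X := A) (i := (⟨a, by omega⟩ : Fin (n + 2)))
    (j := (⟨b - 1, by omega⟩ : Fin (n + 2))) (by simp [Fin.le_def]; omega)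
  calc A.δ (⟨a, by omega⟩ : Fin (n + 2)) (A.δ (Fin.succ ⟨b - 1, by omega⟩) u)
      = (A.δ (Fin.succ ⟨b - 1, by omega⟩) ≫ A.δ (⟨a, by omega⟩ : Fin (n + 2))) u := rfl
    _ = (A.δ (Fin.castSucc ⟨a, by omega⟩) ≫ A.δ (⟨b - 1, by omega⟩ : Fin (n + 2))) u := by
        rw [h]
    _ = A.δ (⟨b - 1, by omega⟩ : Fin (n + 2)) (A.δ (⟨a, by omega⟩ : Fin (n + 3)) u) := rfl

/-! ### The normalized Moore complex in positive degrees, elementwise -/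

private lemma objX_factors {W : AddCommGrpCat.{u}} (m : ℕ)
    (g : W ⟶ A.obj (op (SimplexCategory.mk (m+1))))
    (hk : ∀ i : Fin (m+1), (kernelSubobject (A.δ i.succ)).Factors g) :
    (AlgebraicTopology.NormalizedMooreComplex.objX A (m+1)).Factors g := by
  show (Finset.univ.inf fun k : Fin (m+1) => kernelSubobject (A.δ k.succ)).Factors g
  exact (Subobject.finset_inf_factors g).mpr fun i _ => hk i

lemma objX_succ_eq_bot_iff (m : ℕ) :
    AlgebraicTopology.NormalizedMooreComplex.objX A (m+1) = ⊥ ↔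
      ∀ x : A.obj (op (SimplexCategory.mk (m+1))),
        (∀ i : Fin (m+1), A.δ i.succ x = 0) → x = 0 := by
  constructor
  · intro h x hx
    have hfac : (AlgebraicTopology.NormalizedMooreComplex.objX A (m+1)).Factors
        ((AddCommGrpCat.ofHom ((zmultiplesHom _ x).comp AddEquiv.ulift.toAddMonoidHom) :
          AddCommGrpCat.of (ULift.{u} ℤ) ⟶ A.obj (op (SimplexCategory.mk (m+1))))) := by
      apply objX_factors
      intro i
      apply kernelSubobject_factors
      ext z
      show A.δ i.succ (z.down • x) = 0
      rw [map_zsmul, hx i, smul_zero]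
    rw [h] at hfac
    have h0 := (Subobject.bot_factors_iff_zero _).mp hfac
    have h1 := ConcreteCategory.congr_hom h0 (ULift.up (1:ℤ))
    calc x = ((zmultiplesHom _ x).comp (AddEquiv.ulift.toAddMonoidHom :
          ULift.{u} ℤ →+ ℤ)) (ULift.up (1:ℤ)) := by exact (one_zsmul x).symm
      _ = 0 := by exact h1
  · intro h
    have harrow : (AlgebraicTopology.NormalizedMooreComplex.objX A (m+1)).arrow = 0 := by
      ext a
      show (AlgebraicTopology.NormalizedMooreComplex.objX A (m+1)).arrow a = 0
      apply h
      intro i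
      have hf : (kernelSubobject (A.δ i.succ)).Factors
          (AlgebraicTopology.NormalizedMooreComplex.objX A (m+1)).arrow := by
        show ((fun k : Fin (m+1) => kernelSubobject (A.δ k.succ)) i).Factors
          (AlgebraicTopology.NormalizedMooreComplex.objX A (m+1)).arrow
        exact Subobject.finset_inf_arrow_factors Finset.univ
          (fun k : Fin (m+1) => kernelSubobject (A.δ k.succ)) i (Finset.mem_univ i)
      have hz : (AlgebraicTopology.NormalizedMooreComplex.objX A (m+1)).arrow ≫ A.δ i.succ
          = 0 := by
        rw [← Subobject.factorThru_arrow _ _ hf, Category.assoc, kernelSubobject_arrow_comp,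
          comp_zero]
      calc A.δ i.succ ((AlgebraicTopology.NormalizedMooreComplex.objX A (m+1)).arrow a)
          = ((AlgebraicTopology.NormalizedMooreComplex.objX A (m+1)).arrow ≫ A.δ i.succ) a := rfl
        _ = 0 := by rw [hz]; rfl
    refine le_bot_iff.mp (Subobject.le_of_comm
      ((⊥ : Subobject _).factorThru _ ((Subobject.bot_factors_iff_zero _).mpr harrow))
      (Subobject.factorThru_arrow _ _ _))

/-! ### Horn filling (Moore's theorem for simplicial abelian groups) -/

lemma exists_fill (m : ℕ) (k : Fin (m + 3))
    (y : Fin (m + 3) → A.obj (op (SimplexCategory.mk (m + 1))))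
    (compat : ∀ (a b : ℕ) (hab : a < b) (hb : b < m + 3),
      (⟨a, by omega⟩ : Fin (m + 3)) ≠ k → (⟨b, hb⟩ : Fin (m + 3)) ≠ k →
      A.δ (⟨a, by omega⟩ : Fin (m + 2)) (y ⟨b, hb⟩)
        = A.δ (⟨b - 1, by omega⟩ : Fin (m + 2)) (y ⟨a, by omega⟩)) :
    ∃ x : A.obj (op (SimplexCategory.mk (m + 2))),
      ∀ (j : Fin (m + 3)), j ≠ k → A.δ j x = y j := by
  have phaseA : ∀ r : ℕ, r ≤ k.1 → ∃ u : A.obj (op (SimplexCategory.mk (m + 2))),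
      ∀ (j : Fin (m + 3)), j.1 < r → A.δ j u = y j := by
    intro r
    induction r with
    | zero => exact fun _ => ⟨0, fun j hj => absurd hj (Nat.not_lt_zero _)⟩
    | succ r ih =>
      intro hr
      obtain ⟨u, hu⟩ := ih (by omega)
      have hrM : r < m + 2 := by omega
      have hr3 : r < m + 3 := by omega
      set w := y ⟨r, hr3⟩ - A.δ (⟨r, hr3⟩ : Fin (m + 3)) u with hw
      refine ⟨u + A.σ (⟨r, hrM⟩ : Fin (m + 2)) w, ?_⟩
      intro j hj
      rw [map_add]
      rcases Nat.lt_or_ge j.1 r with hjr | hjr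
      · -- j.1 < r : face already filled, preserved
        have hδσ : A.δ j (A.σ (⟨r, hrM⟩ : Fin (m + 2)) w)
            = A.σ (⟨r - 1, by omega⟩ : Fin (m + 1)) (A.δ (⟨j.1, by omega⟩ : Fin (m + 2)) w) := by
          exact dσ_le' A m r j.1 hrM hjr w
        have hc : A.δ (⟨j.1, by omega⟩ : Fin (m + 2)) (y ⟨r, hr3⟩)
            = A.δ (⟨r - 1, by omega⟩ : Fin (m + 2)) (y ⟨j.1, by omega⟩) :=
          compat j.1 r hjr hr3 (Fin.ne_of_val_ne (by omega : j.1 ≠ k.1))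
            (Fin.ne_of_val_ne (by omega : r ≠ k.1))
        have hd : A.δ (⟨j.1, by omega⟩ : Fin (m + 2)) (A.δ (⟨r, hr3⟩ : Fin (m + 3)) u)
            = A.δ (⟨r - 1, by omega⟩ : Fin (m + 2)) (A.δ (⟨j.1, by omega⟩ : Fin (m + 3)) u) :=
          dδδ' A m j.1 r hjr hr3 u
        have hju : A.δ (⟨j.1, by omega⟩ : Fin (m + 3)) u = y ⟨j.1, by omega⟩ := hu _ hjr
        have hzero : A.δ (⟨j.1, by omega⟩ : Fin (m + 2)) w = 0 := by
          rw [hw, map_sub, hc, hd, hju]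
          have : y (⟨j.1, by omega⟩ : Fin (m + 3)) = y j := by congr 1
          rw [this, sub_self]
        rw [hδσ, hzero, map_zero, add_zero]
        exact hu j hjr
      · -- j.1 = r : the new face
        have hjr' : j.1 = r := by omega
        have ej : j = ⟨r, hr3⟩ := Fin.ext hjr'
        subst ej
        have : A.δ (⟨r, hr3⟩ : Fin (m + 3)) (A.σ (⟨r, hrM⟩ : Fin (m + 2)) w) = w :=
          dσ_self' A (m + 1) r hrM w
        rw [this, hw, add_sub_cancel]
  have phaseB : ∀ t : ℕ, t ≤ m + 2 - k.1 →
      ∃ u : A.obj (op (SimplexCategory.mk (m + 2))),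
        (∀ (j : Fin (m + 3)), j.1 < k.1 → A.δ j u = y j) ∧
        (∀ (j : Fin (m + 3)), m + 3 - t ≤ j.1 → A.δ j u = y j) := by
    intro t
    induction t with
    | zero =>
      intro _
      obtain ⟨u, hu⟩ := phaseA k.1 le_rfl
      exact ⟨u, fun j hj => hu j hj, fun j hj => absurd j.2 (by omega)⟩
    | succ t ih =>
      intro ht
      obtain ⟨u, hlo, hhi⟩ := ih (by omega)
      have hkr : k.1 < m + 2 - t := by omega
      have hr2 : m + 2 - t ≤ m + 2 := by omega
      have hr3 : m + 2 - t < m + 3 := by omega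
      have hrM : m + 2 - t - 1 < m + 2 := by omega
      set r := m + 2 - t with hrdef
      set w := y ⟨r, hr3⟩ - A.δ (⟨r, hr3⟩ : Fin (m + 3)) u with hw
      refine ⟨u + A.σ (⟨r - 1, hrM⟩ : Fin (m + 2)) w, ?_, ?_⟩
      · -- lower faces preserved
        intro j hj
        rw [map_add]
        have hjr : j.1 < r - 1 := by omega
        have hδσ : A.δ j (A.σ (⟨r - 1, hrM⟩ : Fin (m + 2)) w)
            = A.σ (⟨r - 1 - 1, by omega⟩ : Fin (m + 1))
                (A.δ (⟨j.1, by omega⟩ : Fin (m + 2)) w) := by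
          exact dσ_le' A m (r - 1) j.1 hrM hjr w
        have hc : A.δ (⟨j.1, by omega⟩ : Fin (m + 2)) (y ⟨r, hr3⟩)
            = A.δ (⟨r - 1, by omega⟩ : Fin (m + 2)) (y ⟨j.1, by omega⟩) :=
          compat j.1 r (by omega) hr3 (Fin.ne_of_val_ne (by omega : j.1 ≠ k.1))
            (Fin.ne_of_val_ne (by omega : r ≠ k.1))
        have hd : A.δ (⟨j.1, by omega⟩ : Fin (m + 2)) (A.δ (⟨r, hr3⟩ : Fin (m + 3)) u)
            = A.δ (⟨r - 1, by omega⟩ : Fin (m + 2)) (A.δ (⟨j.1, by omega⟩ : Fin (m + 3)) u) :=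
          dδδ' A m j.1 r (by omega) hr3 u
        have hju : A.δ (⟨j.1, by omega⟩ : Fin (m + 3)) u = y ⟨j.1, by omega⟩ := hlo _ hj
        have hzero : A.δ (⟨j.1, by omega⟩ : Fin (m + 2)) w = 0 := by
          rw [hw, map_sub, hc, hd, hju]
          have : y (⟨j.1, by omega⟩ : Fin (m + 3)) = y j := by congr 1
          rw [this, sub_self]
        rw [hδσ, hzero, map_zero, add_zero]
        exact hlo j hj
      · -- upper faces
        intro j hj
        rw [map_add]
        rcases Nat.lt_or_ge r j.1 with hjr | hjr
        · -- j.1 > r : previously filled upper face, preserved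
          have hδσ : A.δ j (A.σ (⟨r - 1, hrM⟩ : Fin (m + 2)) w)
              = A.σ (⟨r - 1, by omega⟩ : Fin (m + 1))
                  (A.δ (⟨j.1 - 1, by omega⟩ : Fin (m + 2)) w) := by
            exact dσ_gt' A m (r - 1) j.1 (by omega) (by omega) j.2 w
          have hc : A.δ (⟨r, by omega⟩ : Fin (m + 2)) (y ⟨j.1, by omega⟩)
              = A.δ (⟨j.1 - 1, by omega⟩ : Fin (m + 2)) (y ⟨r, by omega⟩) :=
            compat r j.1 hjr (by omega) (Fin.ne_of_val_ne (by omega : r ≠ k.1))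
              (Fin.ne_of_val_ne (by omega : j.1 ≠ k.1))
          have hd : A.δ (⟨r, by omega⟩ : Fin (m + 2)) (A.δ (⟨j.1, by omega⟩ : Fin (m + 3)) u)
              = A.δ (⟨j.1 - 1, by omega⟩ : Fin (m + 2)) (A.δ (⟨r, by omega⟩ : Fin (m + 3)) u) :=
            dδδ' A m r j.1 hjr (by omega) u
          have hju : A.δ (⟨j.1, by omega⟩ : Fin (m + 3)) u = y ⟨j.1, by omega⟩ :=
            hhi ⟨j.1, by omega⟩ ((by omega : m + 3 - t ≤ j.1))
          have hey : y (⟨j.1, by omega⟩ : Fin (m + 3)) = y j := by congr 1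
          have hej : A.δ (⟨j.1, by omega⟩ : Fin (m + 3)) u = A.δ j u := by congr 1
          have hzero : A.δ (⟨j.1 - 1, by omega⟩ : Fin (m + 2)) w = 0 := by
            rw [hw, map_sub, ← hc, ← hd, hju, hey, sub_self]
          rw [hδσ, hzero, map_zero, add_zero]
          rw [← hej, hju, hey]
        · -- j.1 = r : the new face
          have hjr' : j.1 = r := by omega
          have ej : j = ⟨r, hr3⟩ := Fin.ext hjr'
          subst ej
          have : A.δ (⟨r, hr3⟩ : Fin (m + 3)) (A.σ (⟨r - 1, hrM⟩ : Fin (m + 2)) w) = w :=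
            dσ_succ' A (m + 1) r (by omega) (by omega) w
          rw [this, hw, add_sub_cancel]
  obtain ⟨u, hlo, hhi⟩ := phaseB (m + 2 - k.1) le_rfl
  refine ⟨u, fun j hjk => ?_⟩
  rcases Nat.lt_or_ge j.1 k.1 with h | h
  · exact hlo j h
  · have : j.1 ≠ k.1 := fun e => hjk (Fin.ext e)
    exact hhi j (by omega)

/-! ### Uniqueness: simplices all of whose faces but one vanish -/

lemma eq_zero_of_faces (n : ℕ)
    (hN : ∀ m : ℕ, n < m → AlgebraicTopology.NormalizedMooreComplex.objX A m = ⊥)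
    (m : ℕ) (hm : n < m + 1) (k : Fin (m + 2)) :
    ∀ (z : A.obj (op (SimplexCategory.mk (m + 1)))),
      (∀ j : Fin (m + 2), j ≠ k → A.δ j z = 0) → z = 0 := by
  induction k using Fin.induction with
  | zero =>
    intro z hz
    exact (objX_succ_eq_bot_iff A m).mp (hN (m+1) hm) z fun i => hz i.succ (Fin.succ_ne_zero i)
  | succ k₀ ih =>
    intro z hz
    have hvz : z - A.σ k₀ (A.δ k₀.succ z) = 0 := by
      apply ih
      intro j hj
      rw [map_sub, sub_eq_zero]
      rcases Nat.lt_trichotomy j.1 k₀.1 with hlt | heq | hgt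
      · -- j.1 < k₀.1, so k₀.1 ≥ 1 and m ≥ 1
        obtain ⟨m', rfl⟩ : ∃ m', m = m' + 1 := ⟨m - 1, by omega⟩
        have hB : A.δ j z = 0 := hz j (Fin.ne_of_val_ne (by simp; omega))
        have hδσ : A.δ j (A.σ k₀ (A.δ k₀.succ z))
            = A.σ (⟨k₀.1 - 1, by omega⟩ : Fin (m' + 1))
                (A.δ (⟨j.1, by omega⟩ : Fin (m' + 2)) (A.δ k₀.succ z)) :=
          dσ_le' A m' k₀.1 j.1 (by omega) hlt (A.δ k₀.succ z)
        have e0 : A.δ (⟨j.1, by omega⟩ : Fin (m' + 2)) (A.δ k₀.succ z)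
            = A.δ (⟨k₀.1 + 1 - 1, by omega⟩ : Fin (m' + 2))
                (A.δ (⟨j.1, by omega⟩ : Fin (m' + 3)) z) :=
          dδδ' A m' j.1 (k₀.1 + 1) (by omega) (by omega) z
        have ez : A.δ (⟨j.1, by omega⟩ : Fin (m' + 3)) z = 0 :=
          hz ⟨j.1, by omega⟩ (Fin.ne_of_val_ne (by simp; omega))
        rw [hB, hδσ, e0, ez, map_zero, map_zero]
      · exact absurd (Fin.ext (by simp [heq]) : j = k₀.castSucc) hj
      · rcases Nat.lt_or_ge (k₀.1 + 1) j.1 with hgt' | hle'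
        · -- j.1 > k₀.1 + 1, so m ≥ 1
          obtain ⟨m', rfl⟩ : ∃ m', m = m' + 1 := ⟨m - 1, by omega⟩
          have hB : A.δ j z = 0 := hz j (Fin.ne_of_val_ne (by simp; omega))
          have hδσ : A.δ j (A.σ k₀ (A.δ k₀.succ z))
              = A.σ (⟨k₀.1, by omega⟩ : Fin (m' + 1))
                  (A.δ (⟨j.1 - 1, by omega⟩ : Fin (m' + 2)) (A.δ k₀.succ z)) :=
            dσ_gt' A m' k₀.1 j.1 (by omega) hgt' (by omega) (A.δ k₀.succ z)
          have e0 : A.δ (⟨k₀.1 + 1, by omega⟩ : Fin (m' + 2))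
                (A.δ (⟨j.1, by omega⟩ : Fin (m' + 3)) z)
              = A.δ (⟨j.1 - 1, by omega⟩ : Fin (m' + 2))
                  (A.δ (⟨k₀.1 + 1, by omega⟩ : Fin (m' + 3)) z) :=
            dδδ' A m' (k₀.1 + 1) j.1 hgt' (by omega) z
          have ez : A.δ (⟨j.1, by omega⟩ : Fin (m' + 3)) z = 0 :=
            hz ⟨j.1, by omega⟩ (Fin.ne_of_val_ne (by simp; omega))
          have e1 : A.δ (⟨j.1 - 1, by omega⟩ : Fin (m' + 2)) (A.δ k₀.succ z) = 0 := by
            have h' := e0.symm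
            rw [ez, map_zero] at h'
            exact h'
          rw [hB, hδσ, e1, map_zero]
        · -- j.1 = k₀.1 + 1, i.e. j = k₀.succ
          have ej : j = k₀.succ := Fin.ext (by simp; omega)
          subst ej
          have h' : A.δ k₀.succ (A.σ k₀ (A.δ k₀.succ z)) = A.δ k₀.succ z :=
            dσ_succ' A m (k₀.1 + 1) (by omega) (by omega) (A.δ k₀.succ z)
          rw [h']
    have hzu : z = A.σ k₀ (A.δ k₀.succ z) := by rwa [sub_eq_zero] at hvz
    have h1 : A.δ k₀.castSucc z = 0 := hz k₀.castSucc (Fin.ne_of_val_ne (by simp))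
    have h2 : A.δ k₀.castSucc (A.σ k₀ (A.δ k₀.succ z)) = A.δ k₀.succ z :=
      dσ_self' A m k₀.1 k₀.2 (A.δ k₀.succ z)
    rw [hzu] at h1
    rw [h2] at h1
    rw [hzu, h1, map_zero]

/-! ### The horn correspondence -/

lemma horn_face_comm (m : ℕ) (k : Fin (m+3)) (ii jj : Fin (m+2)) (hij : ii ≤ jj)
    (hi : ii.castSucc ≠ k) (hj : jj.succ ≠ k) :
    (Λ[m+2, k] : SSet.{u}).map (SimplexCategory.δ ii).op (SSet.horn.face k jj.succ hj)
      = (Λ[m+2, k] : SSet.{u}).map (SimplexCategory.δ jj).op (SSet.horn.face k ii.castSucc hi) := by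
  apply Subtype.ext
  show Δ[m+2].map _ _ = Δ[m+2].map _ _
  rw [stdSimplex.map_apply, stdSimplex.map_apply]
  apply congrArg
  simp only [unop_op, SSet.horn.face, Equiv.apply_symm_apply]
  exact SimplexCategory.δ_comp_δ hij

lemma horn_compat (m : ℕ) (k : Fin (m+3))
    (σ : (Λ[m+2, k] : SSet.{u}) ⟶ (A ⋙ forget AddCommGrpCat)) (ii jj : Fin (m+2)) (hij : ii ≤ jj)
    (hi : ii.castSucc ≠ k) (hj : jj.succ ≠ k) :
    A.δ ii (σ.app (op (SimplexCategory.mk (m+1))) (SSet.horn.face k jj.succ hj))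
      = A.δ jj (σ.app (op (SimplexCategory.mk (m+1))) (SSet.horn.face k ii.castSucc hi)) := by
  have h1 := FunctorToTypes.naturality σ (SimplexCategory.δ ii).op (SSet.horn.face k jj.succ hj)
  have h2 := FunctorToTypes.naturality σ (SimplexCategory.δ jj).op (SSet.horn.face k ii.castSucc hi)
  dsimp at h1 h2
  show (A.map (SimplexCategory.δ ii).op) (σ.app (op (SimplexCategory.mk (m+1))) _)
    = (A.map (SimplexCategory.δ jj).op) (σ.app (op (SimplexCategory.mk (m+1))) _)
  rw [← h1, ← h2, horn_face_comm m k ii jj hij hi hj]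

/-! ### Surjectivity of the partial matching maps (Kan condition) -/

lemma pmm_surjective (m : ℕ) (k : Fin (m + 2)) :
    Function.Surjective (partialMatchingMap (A ⋙ forget AddCommGrpCat) (m + 1) k) := by
  intro σ'
  cases m with
  | zero =>
    have hrev : k.rev ≠ k := Fin.ne_of_val_ne (by rw [Fin.val_rev]; omega)
    set w := σ'.app (op (SimplexCategory.mk 0)) (SSet.horn.face k k.rev hrev) with hwdef
    refine ⟨A.σ (⟨0, by omega⟩ : Fin 1) w, ?_⟩
    apply SSet.horn.hom_ext
    intro j hj
    have ej : j = k.rev := by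
      apply Fin.ext
      rw [Fin.val_rev]
      have : j.1 ≠ k.1 := fun e => hj (Fin.ext e)
      omega
    subst ej
    show A.δ k.rev (A.σ (⟨0, by omega⟩ : Fin 1) w) = σ'.app _ (SSet.horn.face k k.rev hj)
    have hw' : σ'.app (op (SimplexCategory.mk 0)) (SSet.horn.face k k.rev hj) = w := rfl
    rw [hw']
    rcases Nat.lt_or_ge k.rev.1 1 with h0 | h1
    · have : k.rev = ⟨0, by omega⟩ := Fin.ext (by simp; omega)
      rw [this]
      exact dσ_self' A 0 0 (by omega) w
    · have : k.rev = ⟨1, by omega⟩ := Fin.ext (by simp; omega)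
      rw [this]
      exact dσ_succ' A 0 1 (by omega) (by omega) w
  | succ m' =>
    set Y : Fin (m' + 3) → A.obj (op (SimplexCategory.mk (m' + 1))) := fun j =>
      if h : j ≠ k then σ'.app (op (SimplexCategory.mk (m' + 1))) (SSet.horn.face k j h)
      else 0 with hY
    have compat : ∀ (a b : ℕ) (hab : a < b) (hb : b < m' + 3),
        (⟨a, by omega⟩ : Fin (m' + 3)) ≠ k → (⟨b, hb⟩ : Fin (m' + 3)) ≠ k →
        A.δ (⟨a, by omega⟩ : Fin (m' + 2)) (Y ⟨b, hb⟩)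
          = A.δ (⟨b - 1, by omega⟩ : Fin (m' + 2)) (Y ⟨a, by omega⟩) := by
      intro a b hab hb ha' hb'
      have e : (⟨b, hb⟩ : Fin (m' + 3)) = Fin.succ (⟨b - 1, by omega⟩ : Fin (m' + 2)) := by
        apply Fin.ext; simp; omega
      rw [e]
      have hbk : Fin.succ (⟨b - 1, by omega⟩ : Fin (m' + 2)) ≠ k := by rw [← e]; exact hb'
      have hak : Fin.castSucc (⟨a, by omega⟩ : Fin (m' + 2)) ≠ k := ha'
      have hY1 : Y (Fin.succ (⟨b - 1, by omega⟩ : Fin (m' + 2)))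
          = σ'.app (op (SimplexCategory.mk (m' + 1)))
              (SSet.horn.face k (Fin.succ ⟨b - 1, by omega⟩) hbk) := by
        rw [hY]; exact dif_pos hbk
      have hY2 : Y (Fin.castSucc (⟨a, by omega⟩ : Fin (m' + 2)))
          = σ'.app (op (SimplexCategory.mk (m' + 1)))
              (SSet.horn.face k (Fin.castSucc ⟨a, by omega⟩) hak) := by
        rw [hY]; exact dif_pos hak
      calc A.δ (⟨a, by omega⟩ : Fin (m' + 2)) (Y (Fin.succ ⟨b - 1, by omega⟩))
          = A.δ (⟨a, by omega⟩ : Fin (m' + 2)) (σ'.app _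
              (SSet.horn.face k (Fin.succ ⟨b - 1, by omega⟩) hbk)) := by rw [hY1]
        _ = A.δ (⟨b - 1, by omega⟩ : Fin (m' + 2)) (σ'.app _
              (SSet.horn.face k (Fin.castSucc ⟨a, by omega⟩) hak)) :=
            horn_compat A m' k σ' ⟨a, by omega⟩ ⟨b - 1, by omega⟩
              (by simp [Fin.le_def]; omega) hak hbk
        _ = A.δ (⟨b - 1, by omega⟩ : Fin (m' + 2)) (Y (Fin.castSucc ⟨a, by omega⟩)) := by
            rw [hY2]
    obtain ⟨x, hx⟩ := exists_fill A m' k Y compat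
    refine ⟨x, ?_⟩
    apply SSet.horn.hom_ext
    intro j hj
    show A.δ j x = σ'.app _ (SSet.horn.face k j hj)
    rw [hx j hj, hY]
    exact dif_pos hj

end HyperAux

/-- Let `A` be a simplicial abelian group and `n ≥ 0`. The underlying
simplicial set of `A` is an `n`-hypergroupoid if and only if the normalized Moore complex
`N(A)` (with `N_m(A) = ⋂_{i=1}^m ker ∂ᵢ`) vanishes in all degrees `m > n`. -/
theorem isHypergroupoid_iff_normalizedMooreComplex_vanishes
    (A : CategoryTheory.SimplicialObject AddCommGrpCat.{u}) (n : ℕ) :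
    IsHypergroupoid n (A ⋙ forget AddCommGrpCat) ↔
      ∀ m : ℕ, n < m → AlgebraicTopology.NormalizedMooreComplex.objX A m = ⊥ := by
  open Opposite HyperAux in
  constructor
  · rintro ⟨hsurj, hbij⟩ m hm
    obtain ⟨m₀, rfl⟩ : ∃ m₀, m = m₀ + 1 := ⟨m - 1, by omega⟩
    rw [objX_succ_eq_bot_iff]
    intro x hx
    have hinj := (hbij m₀ 0 (by omega)).injective
    have heq : partialMatchingMap (A ⋙ forget AddCommGrpCat) (m₀ + 1) 0 x
        = partialMatchingMap (A ⋙ forget AddCommGrpCat) (m₀ + 1) 0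
            (show (A ⋙ forget AddCommGrpCat) _⦋m₀ + 1⦌ from
              (0 : A.obj (op (SimplexCategory.mk (m₀ + 1))))) := by
      apply SSet.horn.hom_ext
      intro j hj
      show A.δ j x = A.δ j (0 : A.obj (op (SimplexCategory.mk (m₀ + 1))))
      rw [map_zero]
      have h' := hx (j.pred hj)
      rwa [Fin.succ_pred] at h'
    exact hinj heq
  · intro hN
    have hsurj := fun (m : ℕ) (k : Fin (m + 2)) => HyperAux.pmm_surjective A m k
    refine ⟨hsurj, fun m k hm => ⟨?_, hsurj m k⟩⟩
    intro x x' hxx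
    have hface : ∀ (j : Fin (m + 2)) (hj : j ≠ k),
        A.δ j (x : A.obj (op (SimplexCategory.mk (m + 1))))
          = A.δ j (x' : A.obj (op (SimplexCategory.mk (m + 1)))) := fun j hj =>
      congrFun (congrArg (fun σ => σ.app (op (SimplexCategory.mk m))) hxx)
        (SSet.horn.face k j hj)
    have hz : (x : A.obj (op (SimplexCategory.mk (m + 1)))) - x' = 0 := by
      apply HyperAux.eq_zero_of_faces A n hN m hm k
      intro j hj
      exact (map_sub (A.δ j).hom _ _).trans (sub_eq_zero.mpr (hface j hj))
    have : (x : A.obj (op (SimplexCategory.mk (m + 1)))) = x' := by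
      rwa [sub_eq_zero] at hz
    exact this
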